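/- Let W_8 be the Wagner graph (the 8-cycle with all four antipodal pairs of vertices joined by edges, also known as the Möbius–Kantor graph V_8). Then γ(W_8) = 2. -/

import Mathlib

open Finset

/-- Z/2 boundary of a chain represented as a set of simplices. -/
def bdry {V : Type} [DecidableEq V] (c : Finset (Finset V)) : Finset (Finset V) :=
  (c.sup Finset.powerset).filter fun τ =>
    Odd ((c.filter fun σ => τ ⊆ σ ∧ τ.card + 1 = σ.card).card)

def IsChainOf {V : Type} [DecidableEq V] (K : Finset (Finset V)) (d : ℕ)
    (c : Finset (Finset V)) : Prop :=
  ∀ σ ∈ c, σ ∈ K ∧ σ.card = d + 1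

/-- Reduced simplicial Z/2-homology of the complex `K` is nonzero in dimension `d`. -/
def RedHomNonzero {V : Type} [DecidableEq V] (K : Finset (Finset V)) (d : ℕ) : Prop :=
  ∃ c : Finset (Finset V), IsChainOf K d c ∧ bdry c = ∅ ∧
    ∀ b : Finset (Finset V), IsChainOf K (d + 1) b → bdry b ≠ c

/-- The nerve of a finite family of nonempty finite sets. -/
def nerveF {V ι : Type} [DecidableEq V] [Fintype V] [Fintype ι] [DecidableEq ι]
    (F : ι → Finset V) : Finset (Finset ι) :=
  Finset.univ.filter fun σ : Finset ι => σ.Nonempty ∧ (σ.inf F).Nonempty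

/-- `F` is a connected cover in `G`: a family of (vertex sets of) induced subgraphs,
all of whose nonempty intersections induce connected subgraphs. -/
def IsConnCover {V ι : Type} [DecidableEq V] [Fintype V] [Fintype ι] [DecidableEq ι]
    (G : SimpleGraph V) (F : ι → Finset V) : Prop :=
  (∀ i, (F i).Nonempty) ∧
  ∀ σ : Finset ι, σ.Nonempty → (σ.inf F).Nonempty →
    (G.induce ((σ.inf F : Finset V) : Set V)).Connected

/-- The homological dimension of `G` is at least `d`. -/
def GammaGe {V : Type} [DecidableEq V] [Fintype V] (G : SimpleGraph V) (d : ℕ) : Prop :=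
  ∃ (n : ℕ) (F : Fin n → Finset V), IsConnCover G F ∧ RedHomNonzero (nerveF F) d

/-- The homological dimension of `G` equals the integer `m`:
`m` is the greatest `d` with `GammaGe G d` (and `m = -1` when there is none). -/
def HomDimEq {V : Type} [DecidableEq V] [Fintype V] (G : SimpleGraph V) (m : ℤ) : Prop :=
  (∀ d : ℕ, m < (d : ℤ) → ¬ GammaGe G d) ∧ (∀ d : ℕ, (d : ℤ) = m → GammaGe G d)

/-- `H` is a minor of `G`. -/
def IsMinor {W V : Type} [Fintype W] [DecidableEq W] [Fintype V] [DecidableEq V]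
    (H : SimpleGraph W) (G : SimpleGraph V) : Prop :=
  ∃ B : W → Finset V,
    (∀ w, (B w).Nonempty) ∧
    (∀ u w, u ≠ w → Disjoint (B u) (B w)) ∧
    (∀ w, (G.induce ((B w : Finset V) : Set V)).Connected) ∧
    (∀ u w, H.Adj u w → ∃ a ∈ B u, ∃ b ∈ B w, G.Adj a b)


/-- The Wagner graph `W₈`: the 8-cycle together with the four antipodal chords. -/
def wagnerGraph : SimpleGraph (Fin 8) :=
  SimpleGraph.fromRel fun i j => j - i = 1 ∨ j - i = 4


-- ===== auxiliary development =====
namespace Hom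
variable {V : Type} [DecidableEq V]

def cnt (c : Finset (Finset V)) (τ : Finset V) : ℕ :=
  (c.filter fun σ => τ ⊆ σ ∧ τ.card + 1 = σ.card).card

lemma odd_iff_zmod {n : ℕ} : Odd n ↔ (n : ZMod 2) = 1 := by
  rw [Nat.odd_iff, ← ZMod.natCast_mod n 2]
  rcases Nat.mod_two_eq_zero_or_one n with h | h <;> rw [h] <;> simp

lemma not_odd_iff_zmod {n : ℕ} : ¬ Odd n ↔ (n : ZMod 2) = 0 := by
  have h2 : ∀ x : ZMod 2, x = 0 ∨ x = 1 := by decide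
  rw [odd_iff_zmod]
  rcases h2 (n : ZMod 2) with h | h <;> simp [h]

lemma mem_bdry {c : Finset (Finset V)} {τ : Finset V} :
    τ ∈ bdry c ↔ Odd (cnt c τ) := by
  unfold bdry cnt
  rw [mem_filter]
  refine ⟨fun h => h.2, fun h => ⟨?_, h⟩⟩
  have hne : (c.filter fun σ => τ ⊆ σ ∧ τ.card + 1 = σ.card).Nonempty := by
    rw [← card_pos]; exact h.pos
  obtain ⟨σ, hσ⟩ := hne
  rw [mem_filter] at hσ
  rw [mem_sup]
  exact ⟨σ, hσ.1, by simpa [mem_powerset] using hσ.2.1⟩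

lemma cnt_cast_sum (c : Finset (Finset V)) (τ : Finset V) :
    ((cnt c τ : ZMod 2)) = ∑ σ ∈ c, if τ ⊆ σ ∧ τ.card + 1 = σ.card then (1 : ZMod 2) else 0 := by
  unfold cnt
  rw [Finset.card_filter]
  push_cast
  apply Finset.sum_congr rfl
  intro σ _
  split_ifs <;> simp

lemma count_between {τ σ : Finset V} (hsub : τ ⊆ σ) (hc : σ.card = τ.card + 2)
    (P : Finset (Finset V)) (hP : σ.powerset ⊆ P) :
    (P.filter fun σ' => (τ ⊆ σ' ∧ τ.card + 1 = σ'.card) ∧ σ' ⊆ σ ∧ σ'.card + 1 = σ.card).card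
      = 2 := by
  have himg : (P.filter fun σ' => (τ ⊆ σ' ∧ τ.card + 1 = σ'.card) ∧ σ' ⊆ σ ∧ σ'.card + 1 = σ.card)
      = (σ \ τ).image (fun x => insert x τ) := by
    ext σ'
    simp only [mem_filter, mem_image, mem_sdiff]
    constructor
    · rintro ⟨hmem, ⟨hτσ', hcard1⟩, hσ'σ, hcard2⟩
      have hdiff : (σ' \ τ).card = 1 := by
        rw [Finset.card_sdiff_of_subset hτσ']; omega
      rw [Finset.card_eq_one] at hdiff
      obtain ⟨x, hx⟩ := hdiff
      have hxm : x ∈ σ' \ τ := hx ▸ Finset.mem_singleton_self x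
      rw [Finset.mem_sdiff] at hxm
      refine ⟨x, ⟨hσ'σ hxm.1, hxm.2⟩, ?_⟩
      apply Finset.Subset.antisymm
      · intro y hy
        rcases Finset.mem_insert.mp hy with h | h
        · exact h ▸ hxm.1
        · exact hτσ' h
      · intro y hy
        by_cases hyτ : y ∈ τ
        · exact Finset.mem_insert_of_mem hyτ
        · have : y ∈ σ' \ τ := Finset.mem_sdiff.mpr ⟨hy, hyτ⟩
          rw [hx, Finset.mem_singleton] at this
          exact this ▸ Finset.mem_insert_self x τ
    · rintro ⟨x, ⟨hxσ, hxτ⟩, rfl⟩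
      have hins : insert x τ ⊆ σ := Finset.insert_subset hxσ hsub
      have hcard : (insert x τ).card = τ.card + 1 := Finset.card_insert_of_notMem hxτ
      exact ⟨hP (Finset.mem_powerset.mpr hins),
        ⟨Finset.subset_insert x τ, hcard.symm⟩, hins, by omega⟩
  rw [himg, Finset.card_image_of_injOn, Finset.card_sdiff_of_subset hsub]
  · omega
  · intro x hx y hy hxy
    rw [Finset.mem_coe, mem_sdiff] at hx hy
    have : x ∈ insert y τ := by
      have := Finset.mem_insert_self x τ
      simpa only [hxy] using this
    rcases Finset.mem_insert.mp this with h | h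
    · exact h
    · exact absurd h hx.2

lemma bdry_bdry (c : Finset (Finset V)) : bdry (bdry c) = ∅ := by
  rw [Finset.eq_empty_iff_forall_notMem]
  intro τ hmem
  rw [mem_bdry, odd_iff_zmod] at hmem
  set P := c.sup Finset.powerset with hP
  have hsub : bdry c ⊆ P := Finset.filter_subset _ _
  have key : ((cnt (bdry c) τ : ZMod 2)) = 0 := by
    rw [cnt_cast_sum]
    have h1 : ∑ σ' ∈ bdry c, (if τ ⊆ σ' ∧ τ.card + 1 = σ'.card then (1 : ZMod 2) else 0)
        = ∑ σ' ∈ P, (if τ ⊆ σ' ∧ τ.card + 1 = σ'.card then (cnt c σ' : ZMod 2) else 0) := by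
      rw [show bdry c = P.filter (fun σ' => Odd (cnt c σ')) from by
        ext x; simp [mem_bdry, hP, bdry, cnt, mem_filter]]
      rw [Finset.sum_filter]
      apply Finset.sum_congr rfl
      intro σ' _
      by_cases ho : Odd (cnt c σ') <;> by_cases hco : τ ⊆ σ' ∧ τ.card + 1 = σ'.card <;>
        simp only [ho, hco, if_true, if_false, ite_true, ite_false]
      · rw [odd_iff_zmod.mp ho]
      · rw [(not_odd_iff_zmod.mp ho)]; simp
    rw [h1]
    have h3 : ∀ σ' ∈ P, (if τ ⊆ σ' ∧ τ.card + 1 = σ'.card then (cnt c σ' : ZMod 2) else 0)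
        = ∑ σ ∈ c, (if (τ ⊆ σ' ∧ τ.card + 1 = σ'.card) ∧ (σ' ⊆ σ ∧ σ'.card + 1 = σ.card)
            then (1 : ZMod 2) else 0) := by
      intro σ' _
      by_cases hco : τ ⊆ σ' ∧ τ.card + 1 = σ'.card
      · rw [if_pos hco, cnt_cast_sum]
        apply Finset.sum_congr rfl
        intro σ _
        by_cases h : σ' ⊆ σ ∧ σ'.card + 1 = σ.card <;> simp [h, hco]
      · rw [if_neg hco]
        rw [eq_comm, Finset.sum_eq_zero]
        intro σ _
        rw [if_neg (by tauto)]
    rw [Finset.sum_congr rfl h3, Finset.sum_comm]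
    apply Finset.sum_eq_zero
    intro σ hσ
    have : ∑ σ' ∈ P, (if (τ ⊆ σ' ∧ τ.card + 1 = σ'.card) ∧ (σ' ⊆ σ ∧ σ'.card + 1 = σ.card)
        then (1 : ZMod 2) else 0)
        = ((P.filter fun σ' => (τ ⊆ σ' ∧ τ.card + 1 = σ'.card) ∧ σ' ⊆ σ ∧ σ'.card + 1 = σ.card).card : ZMod 2) := by
      rw [Finset.card_filter]; push_cast
      apply Finset.sum_congr rfl
      intro σ' _; split_ifs <;> simp
    rw [this]
    by_cases hgood : τ ⊆ σ ∧ σ.card = τ.card + 2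
    · rw [count_between hgood.1 hgood.2 P
        (by intro x hx; rw [mem_sup]; exact ⟨σ, hσ, hx⟩)]
      decide
    · have : (P.filter fun σ' => (τ ⊆ σ' ∧ τ.card + 1 = σ'.card) ∧ σ' ⊆ σ ∧ σ'.card + 1 = σ.card) = ∅ := by
        rw [Finset.filter_eq_empty_iff]
        rintro σ' _ ⟨⟨h1, h2⟩, h3, h4⟩
        exact hgood ⟨h1.trans h3, by omega⟩
      rw [this]; simp
  rw [key] at hmem
  exact (by decide : (0 : ZMod 2) ≠ 1) hmem

lemma card_symmDiff_parity (s t : Finset (Finset V)) :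
    ((symmDiff s t).card : ZMod 2) = (s.card : ZMod 2) + t.card := by
  have h1 : (symmDiff s t) ∪ (s ∩ t) = s ∪ t := by
    ext x; simp [Finset.mem_symmDiff]; tauto
  have h2 : Disjoint (symmDiff s t) (s ∩ t) := by
    rw [Finset.disjoint_left]
    intro a ha hb
    simp [Finset.mem_symmDiff] at ha
    simp at hb
    tauto
  have h3 : (symmDiff s t).card + (s ∩ t).card = (s ∪ t).card := by
    rw [← card_union_of_disjoint h2, h1]
  have h4 := Finset.card_union_add_card_inter s t
  have : (symmDiff s t).card + 2 * (s ∩ t).card = s.card + t.card := by omega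
  have := congrArg (fun n : ℕ => (n : ZMod 2)) this
  push_cast at this
  have h2 : (2 : ZMod 2) = 0 := by decide
  rw [h2] at this
  simpa using this

lemma filter_symmDiff' (p : Finset V → Prop) [DecidablePred p] (s t : Finset (Finset V)) :
    (symmDiff s t).filter p = symmDiff (s.filter p) (t.filter p) := by
  ext x; simp [Finset.mem_symmDiff, mem_filter]; tauto

lemma cnt_symmDiff (s t : Finset (Finset V)) (τ : Finset V) :
    ((cnt (symmDiff s t) τ : ZMod 2)) = (cnt s τ : ZMod 2) + cnt t τ := by
  unfold cnt
  rw [filter_symmDiff']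
  exact card_symmDiff_parity _ _

lemma bdry_symmDiff (s t : Finset (Finset V)) :
    bdry (symmDiff s t) = symmDiff (bdry s) (bdry t) := by
  ext τ
  rw [Finset.mem_symmDiff]
  simp only [mem_bdry, odd_iff_zmod]
  rw [cnt_symmDiff]
  have h2 : ∀ x : ZMod 2, x = 0 ∨ x = 1 := by decide
  rcases h2 (cnt s τ : ZMod 2) with h | h <;> rcases h2 (cnt t τ : ZMod 2) with h' | h' <;>
    simp [h, h'] <;> decide

lemma not_mem_bdry_empty {c : Finset (Finset V)} (h : bdry c = ∅) (τ : Finset V) :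
    ¬ Odd (cnt c τ) := by
  rw [← mem_bdry, h]; simp

/-- The cone lemma over `Z/2`. -/
lemma cone_lemma (K : Finset (Finset V)) (d : ℕ) (c : Finset (Finset V)) (i0 : V)
    (hc : IsChainOf K d c) (hcyc : bdry c = ∅) (hins : ∀ σ ∈ c, insert i0 σ ∈ K) :
    ∃ b, IsChainOf K (d + 1) b ∧ bdry b = c := by
  classical
  set c₀ := c.filter (fun σ => i0 ∉ σ) with hc₀
  refine ⟨c₀.image (insert i0), ?_, ?_⟩
  · intro σ' hσ'
    rw [mem_image] at hσ'
    obtain ⟨σ, hσ, rfl⟩ := hσ'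
    rw [hc₀, mem_filter] at hσ
    exact ⟨hins σ hσ.1, by rw [card_insert_of_notMem hσ.2, (hc σ hσ.1).2]⟩
  · ext τ
    rw [mem_bdry]
    have hfilt : ∀ (q : Finset V → Prop) [DecidablePred q],
        (c₀.image (insert i0)).filter q = (c₀.filter (fun σ => q (insert i0 σ))).image (insert i0) := by
      intro q _
      ext σ'
      simp only [mem_filter, mem_image]
      constructor
      · rintro ⟨⟨σ, hσ, rfl⟩, hq⟩; exact ⟨σ, ⟨hσ, hq⟩, rfl⟩
      · rintro ⟨σ, ⟨hσ, hq⟩, rfl⟩; exact ⟨⟨σ, hσ, rfl⟩, hq⟩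
    have hinj : ∀ s ⊆ c₀, (s.image (insert i0)).card = s.card := by
      intro s hs
      apply Finset.card_image_of_injOn
      intro x hx y hy hxy
      have hx' : i0 ∉ x := (mem_filter.mp (hs hx)).2
      have hy' : i0 ∉ y := (mem_filter.mp (hs hy)).2
      have : (insert i0 x).erase i0 = (insert i0 y).erase i0 := by rw [hxy]
      rwa [Finset.erase_insert hx', Finset.erase_insert hy'] at this
    have hcnt : cnt (c₀.image (insert i0)) τ
        = (c₀.filter (fun σ => τ ⊆ insert i0 σ ∧ τ.card + 1 = (insert i0 σ).card)).card := by
      unfold cnt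
      rw [hfilt]
      exact hinj _ (filter_subset _ _)
    by_cases hi0 : i0 ∈ τ
    · -- case i0 ∈ τ
      set ρ := τ.erase i0 with hρ
      have hρτ : insert i0 ρ = τ := Finset.insert_erase hi0
      by_cases hcard : τ.card = d + 1
      · have h1 : (c₀.filter (fun σ => τ ⊆ insert i0 σ ∧ τ.card + 1 = (insert i0 σ).card))
            = c₀.filter (fun σ => ρ ⊆ σ) := by
          apply Finset.filter_congr
          intro σ hσ
          rw [hc₀, mem_filter] at hσ
          have hσcard : σ.card = d + 1 := (hc σ hσ.1).2
          have hcins : (insert i0 σ).card = σ.card + 1 := card_insert_of_notMem hσ.2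
          constructor
          · rintro ⟨hsub, _⟩
            intro x hx
            have hxτ : x ∈ τ := Finset.mem_of_mem_erase hx
            have hxne : x ≠ i0 := Finset.ne_of_mem_erase hx
            rcases Finset.mem_insert.mp (hsub hxτ) with h | h
            · exact absurd h hxne
            · exact h
          · intro hsub
            constructor
            · intro x hx
              by_cases hxi : x = i0
              · exact hxi ▸ Finset.mem_insert_self i0 σ
              · exact Finset.mem_insert_of_mem (hsub (Finset.mem_erase.mpr ⟨hxi, hx⟩))
            · omega
        have hρcard : ρ.card = d := by
          rw [hρ, Finset.card_erase_of_mem hi0]; omega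
        have h2 : cnt c ρ = (c₀.filter (fun σ => ρ ⊆ σ)).card + (if τ ∈ c then 1 else 0) := by
          unfold cnt
          have hsplit : c.filter (fun σ => ρ ⊆ σ ∧ ρ.card + 1 = σ.card)
              = c₀.filter (fun σ => ρ ⊆ σ) ∪ (c.filter (fun σ => i0 ∈ σ ∧ ρ ⊆ σ ∧ σ.card = d + 1)) := by
            ext σ
            simp only [mem_filter, mem_union, hc₀, mem_filter]
            constructor
            · rintro ⟨hσc, hsub, hcard'⟩
              have : σ.card = d + 1 := (hc σ hσc).2
              by_cases hi : i0 ∈ σ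
              · exact Or.inr ⟨hσc, hi, hsub, this⟩
              · exact Or.inl ⟨⟨hσc, hi⟩, hsub⟩
            · rintro (⟨⟨hσc, hi⟩, hsub⟩ | ⟨hσc, hi, hsub, hcard'⟩)
              · exact ⟨hσc, hsub, by have := (hc σ hσc).2; omega⟩
              · exact ⟨hσc, hsub, by omega⟩
          rw [hsplit, card_union_of_disjoint]
          · congr 1
            have : c.filter (fun σ => i0 ∈ σ ∧ ρ ⊆ σ ∧ σ.card = d + 1) = c.filter (fun σ => σ = τ) := by
              apply Finset.filter_congr
              intro σ hσc
              constructor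
              · rintro ⟨hi, hsub, hcard'⟩
                have hτσ : τ ⊆ σ := by
                  rw [← hρτ]
                  exact Finset.insert_subset hi hsub
                exact (Finset.eq_of_subset_of_card_le hτσ (by omega)).symm
              · rintro rfl
                exact ⟨hi0, Finset.erase_subset _ _, hcard⟩
            rw [this, Finset.filter_eq']
            split_ifs <;> simp
          · rw [Finset.disjoint_left]
            intro σ hσ1 hσ2
            rw [hc₀, mem_filter, mem_filter] at hσ1
            rw [mem_filter] at hσ2
            exact hσ1.1.2 hσ2.2.1
        have hpar := not_mem_bdry_empty hcyc ρ
        rw [h2] at hpar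
        rw [hcnt, h1]
        rw [Nat.odd_iff] at hpar ⊢
        constructor
        · intro h
          by_contra hτc
          simp [hτc] at hpar
          omega
        · intro h
          simp [h] at hpar
          omega
      · -- τ.card ≠ d + 1 : both sides false
        have h1 : (c₀.filter (fun σ => τ ⊆ insert i0 σ ∧ τ.card + 1 = (insert i0 σ).card)) = ∅ := by
          rw [Finset.filter_eq_empty_iff]
          intro σ hσ
          rw [hc₀, mem_filter] at hσ
          have : σ.card = d + 1 := (hc σ hσ.1).2
          have hcins : (insert i0 σ).card = σ.card + 1 := card_insert_of_notMem hσ.2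
          rintro ⟨_, h⟩
          omega
        rw [hcnt, h1]
        simp only [card_empty]
        constructor
        · intro h; exact absurd h (by decide)
        · intro h; exact absurd ((hc τ h).2) hcard
    · -- case i0 ∉ τ
      have h1 : (c₀.filter (fun σ => τ ⊆ insert i0 σ ∧ τ.card + 1 = (insert i0 σ).card))
          = c₀.filter (fun σ => σ = τ) := by
        apply Finset.filter_congr
        intro σ hσ
        rw [hc₀, mem_filter] at hσ
        have hσcard : σ.card = d + 1 := (hc σ hσ.1).2
        have hcins : (insert i0 σ).card = σ.card + 1 := card_insert_of_notMem hσ.2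
        constructor
        · rintro ⟨hsub, hcard'⟩
          have hτσ : τ ⊆ σ := by
            intro x hx
            rcases Finset.mem_insert.mp (hsub hx) with h | h
            · exact absurd (h ▸ hx) hi0
            · exact h
          exact (Finset.eq_of_subset_of_card_le hτσ (by omega)).symm
        · rintro rfl
          exact ⟨Finset.subset_insert _ _, by omega⟩
      rw [hcnt, h1, Finset.filter_eq']
      split_ifs with hτ
      · simp only [card_singleton]
        rw [hc₀, mem_filter] at hτ
        simp [hτ.1]
      · simp only [card_empty]
        rw [hc₀, mem_filter] at hτ
        constructor
        · intro h; exact absurd h (by decide)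
        · intro h
          exact absurd ⟨h, hi0⟩ hτ

/-- "Every d-cycle bounds" for the complex `K`. -/
def Bnd (K : Finset (Finset V)) (d : ℕ) : Prop :=
  ∀ c, IsChainOf K d c → bdry c = ∅ → ∃ b, IsChainOf K (d + 1) b ∧ bdry b = c

/-- downward closed on nonempty subsets -/
def DC (K : Finset (Finset V)) : Prop :=
  ∀ σ ∈ K, ∀ τ, τ ⊆ σ → τ.Nonempty → τ ∈ K

lemma bnd_empty (d : ℕ) : Bnd (∅ : Finset (Finset V)) d := by
  intro c hc _
  have : c = ∅ := by
    rw [Finset.eq_empty_iff_forall_notMem]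
    intro σ hσ
    simpa using (hc σ hσ).1
  subst this
  exact ⟨∅, by intro σ h; simp at h, by simp [bdry]⟩

lemma bdry_empty_chain : bdry (∅ : Finset (Finset V)) = ∅ := by simp [bdry]

lemma mv_lemma (K₁ K₂ : Finset (Finset V)) (e : ℕ)
    (hdc1 : DC K₁) (hdc2 : DC K₂)
    (hB1 : Bnd K₁ (e + 1)) (hB2 : Bnd K₂ (e + 1)) (hB12 : Bnd (K₁ ∩ K₂) e) :
    Bnd (K₁ ∪ K₂) (e + 1) := by
  intro c hc hcyc
  classical
  set c₁ := c.filter (· ∈ K₁) with hc₁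
  set c₂ := c \ c₁ with hc₂
  have hcsplit : symmDiff c₁ c₂ = c := by
    ext σ; simp only [Finset.mem_symmDiff, hc₂, hc₁, mem_sdiff, mem_filter]; tauto
  have hchain1 : IsChainOf K₁ (e + 1) c₁ := by
    intro σ hσ
    rw [hc₁, mem_filter] at hσ
    exact ⟨hσ.2, (hc σ hσ.1).2⟩
  have hchain2 : IsChainOf K₂ (e + 1) c₂ := by
    intro σ hσ
    rw [hc₂, mem_sdiff, hc₁, mem_filter] at hσ
    have := hc σ hσ.1
    rcases Finset.mem_union.mp this.1 with h | h
    · exact absurd ⟨hσ.1, h⟩ hσ.2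
    · exact ⟨h, this.2⟩
  set z := bdry c₁ with hz
  have hz2 : bdry c₂ = z := by
    have := bdry_symmDiff c₁ c₂
    rw [hcsplit, hcyc] at this
    have h' := this.symm
    rw [← Finset.bot_eq_empty] at h'
    exact (symmDiff_eq_bot.mp h').symm
  have hzchain : IsChainOf (K₁ ∩ K₂) e z := by
    intro τ hτ
    have hτ2 : τ ∈ bdry c₂ := by rw [hz2]; exact hτ
    rw [hz, mem_bdry] at hτ
    rw [mem_bdry] at hτ2
    have h1 : ∃ σ ∈ c₁, τ ⊆ σ ∧ τ.card + 1 = σ.card := by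
      have := hτ.pos
      rw [cnt, card_pos] at this
      obtain ⟨σ, hσ⟩ := this
      rw [mem_filter] at hσ
      exact ⟨σ, hσ.1, hσ.2⟩
    have h2 : ∃ σ ∈ c₂, τ ⊆ σ ∧ τ.card + 1 = σ.card := by
      have := hτ2.pos
      rw [cnt, card_pos] at this
      obtain ⟨σ, hσ⟩ := this
      rw [mem_filter] at hσ
      exact ⟨σ, hσ.1, hσ.2⟩
    obtain ⟨σ, hσc, hsub, hcard⟩ := h1
    obtain ⟨σ', hσc', hsub', hcard'⟩ := h2
    have hτcard : τ.card = e + 1 := by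
      have := (hchain1 σ hσc).2; omega
    have hτne : τ.Nonempty := by
      rw [← card_pos]; omega
    rw [mem_inter]
    exact ⟨⟨hdc1 σ (hchain1 σ hσc).1 τ hsub hτne, hdc2 σ' (hchain2 σ' hσc').1 τ hsub' hτne⟩, hτcard⟩
  have hzcyc : bdry z = ∅ := by rw [hz]; exact bdry_bdry c₁
  obtain ⟨w, hwchain, hwbd⟩ := hB12 z hzchain hzcyc
  have hy1chain : IsChainOf K₁ (e + 1) (symmDiff c₁ w) := by
    intro σ hσ
    rw [Finset.mem_symmDiff] at hσ
    rcases hσ with ⟨h, _⟩ | ⟨h, _⟩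
    · exact hchain1 σ h
    · exact ⟨(Finset.mem_inter.mp (hwchain σ h).1).1, (hwchain σ h).2⟩
  have hy2chain : IsChainOf K₂ (e + 1) (symmDiff c₂ w) := by
    intro σ hσ
    rw [Finset.mem_symmDiff] at hσ
    rcases hσ with ⟨h, _⟩ | ⟨h, _⟩
    · exact hchain2 σ h
    · exact ⟨(Finset.mem_inter.mp (hwchain σ h).1).2, (hwchain σ h).2⟩
  have hy1cyc : bdry (symmDiff c₁ w) = ∅ := by
    rw [bdry_symmDiff, hwbd, ← hz, symmDiff_self, Finset.bot_eq_empty]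
  have hy2cyc : bdry (symmDiff c₂ w) = ∅ := by
    rw [bdry_symmDiff, hwbd, hz2, symmDiff_self, Finset.bot_eq_empty]
  obtain ⟨b₁, hb₁chain, hb₁⟩ := hB1 _ hy1chain hy1cyc
  obtain ⟨b₂, hb₂chain, hb₂⟩ := hB2 _ hy2chain hy2cyc
  refine ⟨symmDiff b₁ b₂, ?_, ?_⟩
  · intro σ hσ
    rw [Finset.mem_symmDiff] at hσ
    rcases hσ with ⟨h, _⟩ | ⟨h, _⟩
    · exact ⟨Finset.mem_union.mpr (Or.inl (hb₁chain σ h).1), (hb₁chain σ h).2⟩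
    · exact ⟨Finset.mem_union.mpr (Or.inr (hb₂chain σ h).1), (hb₂chain σ h).2⟩
  · rw [bdry_symmDiff, hb₁, hb₂, ← hcsplit]
    ext σ
    simp only [Finset.mem_symmDiff]
    tauto

end Hom

namespace Reach
variable {α : Type} [Fintype α] [DecidableEq α]

def stepR (adj : α → α → Bool) (s : Finset α) (u v : α) : Prop :=
  u ∈ s ∧ v ∈ s ∧ adj u v = true

def ReachIn (adj : α → α → Bool) (s : Finset α) (u v : α) : Prop :=
  Relation.ReflTransGen (stepR adj s) u v

def ConnIn (adj : α → α → Bool) (s : Finset α) : Prop :=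
  ∀ u ∈ s, ∀ v ∈ s, ReachIn adj s u v

def expandF (adj : α → α → Bool) (s : Finset α) (X : Finset α) : Finset α :=
  X ∪ s.filter (fun v => ∃ u ∈ X, adj u v = true)

def reachSet (adj : α → α → Bool) (s : Finset α) (u : α) : Finset α :=
  (expandF adj s)^[Fintype.card α] {u}

lemma expand_infl (adj : α → α → Bool) (s X : Finset α) : X ⊆ expandF adj s X :=
  Finset.subset_union_left

lemma iterate_infl (adj : α → α → Bool) (s X : Finset α) (k : ℕ) :
    X ⊆ (expandF adj s)^[k] X := by
  induction k with
  | zero => simp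
  | succ n ih =>
    rw [Function.iterate_succ_apply']
    exact ih.trans (expand_infl adj s _)

lemma stab_prop (adj : α → α → Bool) (s X : Finset α) (k : ℕ) :
    (expandF adj s)^[k+1] X = (expandF adj s)^[k] X
      ∨ X.card + k ≤ ((expandF adj s)^[k] X).card := by
  induction k with
  | zero => right; simp
  | succ n ih =>
    rcases ih with h | h
    · left
      simp only [Function.iterate_succ_apply'] at h ⊢
      rw [h, h]
    · by_cases heq : (expandF adj s)^[n+1] X = (expandF adj s)^[n] X
      · left
        simp only [Function.iterate_succ_apply'] at heq ⊢
        rw [heq, heq]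
      · right
        have hsub : (expandF adj s)^[n] X ⊆ (expandF adj s)^[n+1] X := by
          rw [Function.iterate_succ_apply']
          exact expand_infl adj s _
        have : (expandF adj s)^[n] X ⊂ (expandF adj s)^[n+1] X :=
          Finset.ssubset_iff_subset_ne.mpr ⟨hsub, Ne.symm heq⟩
        have := Finset.card_lt_card this
        omega

lemma reachSet_fixed (adj : α → α → Bool) (s : Finset α) (u : α) :
    expandF adj s (reachSet adj s u) = reachSet adj s u := by
  rcases stab_prop adj s {u} (Fintype.card α) with h | h
  · unfold reachSet
    simp only [Function.iterate_succ_apply'] at h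
    exact h
  · exfalso
    have hle : ((expandF adj s)^[Fintype.card α] {u}).card ≤ Fintype.card α :=
      Finset.card_le_card (Finset.subset_univ _) |>.trans (le_of_eq (Finset.card_univ))
    simp at h
    omega

lemma mem_reachSet {adj : α → α → Bool} {s : Finset α} {u v : α} (hu : u ∈ s) :
    v ∈ reachSet adj s u ↔ ReachIn adj s u v := by
  constructor
  · suffices h : ∀ k, ∀ w ∈ (expandF adj s)^[k] {u}, ReachIn adj s u w by
      exact h _ v
    intro k
    induction k with
    | zero => intro w hw; simp at hw; subst hw; exact Relation.ReflTransGen.refl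
    | succ n ih =>
      intro w hw
      rw [Function.iterate_succ_apply'] at hw
      rcases Finset.mem_union.mp hw with h | h
      · exact ih w h
      · rw [mem_filter] at h
        have hws := h.1
        obtain ⟨u', hu', hadj⟩ := h.2
        have hu's : u' ∈ s := by
          rcases Relation.ReflTransGen.cases_tail (ih u' hu') with h | ⟨c, _, hstep⟩
          · exact h ▸ hu
          · exact hstep.2.1
        exact Relation.ReflTransGen.tail (ih u' hu') ⟨hu's, hws, hadj⟩
  · intro h
    induction h with
    | refl => exact iterate_infl adj s {u} _ (Finset.mem_singleton_self u)
    | tail _ hstep ih =>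
      rename_i b c _
      rw [← reachSet_fixed adj s u]
      unfold expandF
      rw [Finset.mem_union, mem_filter]
      exact Or.inr ⟨hstep.2.1, b, ih, hstep.2.2⟩

instance (adj : α → α → Bool) (s : Finset α) : Decidable (ConnIn adj s) := by
  apply decidable_of_iff (∀ u ∈ s, ∀ v ∈ s, v ∈ reachSet adj s u)
  constructor
  · intro h u hu v hv; exact (mem_reachSet hu).mp (h u hu v hv)
  · intro h u hu v hv; exact (mem_reachSet hu).mpr (h u hu v hv)

lemma reach_mono {adj adj' : α → α → Bool} {s s' : Finset α}
    (hadj : ∀ u v, adj u v = true → adj' u v = true) (hs : s ⊆ s') {u v : α} :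
    ReachIn adj s u v → ReachIn adj' s' u v := by
  intro h
  apply Relation.ReflTransGen.mono _ _ _ h
  rintro a b ⟨h1, h2, h3⟩
  exact ⟨hs h1, hs h2, hadj _ _ h3⟩

def addEdge (adj : α → α → Bool) (x y : α) : α → α → Bool :=
  fun u v => adj u v || decide (u = x ∧ v = y) || decide (u = y ∧ v = x)

lemma addEdge_mono (adj : α → α → Bool) (x y u v : α) (h : adj u v = true) :
    addEdge adj x y u v = true := by
  unfold addEdge; rw [h]; simp

lemma addEdge_symm {adj : α → α → Bool} (hsymm : ∀ u v, adj u v = adj v u) (x y : α) :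
    ∀ u v, addEdge adj x y u v = addEdge adj x y v u := by
  intro u v
  unfold addEdge
  rw [hsymm u v]
  by_cases h1 : u = x ∧ v = y <;> by_cases h2 : u = y ∧ v = x <;>
    by_cases h3 : v = x ∧ u = y <;> by_cases h4 : v = y ∧ u = x <;>
    simp [h1, h2, h3, h4] <;> tauto

/-- Exit lemma: a path from `a` to `v ≠ a` passes first through a neighbour of `a`. -/
lemma exit_lemma {adj : α → α → Bool} {s : Finset α} {a v : α}
    (h : ReachIn adj s a v) (hva : v ≠ a) :
    ∃ w, w ≠ a ∧ (w ∈ s ∧ adj a w = true) ∧ ReachIn adj s w v := by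
  suffices H : ∀ x, ReachIn adj s x v → x = a →
      ∃ w, w ≠ a ∧ (w ∈ s ∧ adj a w = true) ∧ ReachIn adj s w v from H a h rfl
  intro x hx
  induction hx using Relation.ReflTransGen.head_induction_on with
  | refl => intro hxa; exact absurd hxa hva
  | head hstep htail ih =>
    rename_i p c
    intro hpa
    by_cases hca : c = a
    · exact ih hca
    · subst hpa
      exact ⟨c, hca, ⟨hstep.2.1, hstep.2.2⟩, htail⟩

/-- Neighbour existence: if `a ∈ τ` is connected to some `b ≠ a` in `τ`, then `a`
has a neighbour in `τ`. -/
lemma nbr_exists {adj : α → α → Bool} {τ : Finset α} {a b : α}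
    (h : ReachIn adj τ a b) (hba : b ≠ a) :
    ∃ w ∈ τ, w ≠ a ∧ adj a w = true := by
  obtain ⟨w, hwa, ⟨hws, hadj⟩, _⟩ := exit_lemma h hba
  exact ⟨w, hws, hwa, hadj⟩

/-- Surgery: contracting a degree-≤2 vertex `a` with neighbours among `{x, y}`,
adding the edge `x—y`, preserves reachability off `a`. -/
lemma surgery {adj : α → α → Bool} {τ : Finset α} {a x y : α}
    (hsymm : ∀ u v, adj u v = adj v u)
    (hnbr : ∀ u ∈ τ, u ≠ a → adj a u = true → u = x ∨ u = y) :
    ∀ u v, ReachIn adj τ u v → u ≠ a → v ≠ a →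
      ReachIn (addEdge adj x y) (τ.erase a) u v := by
  intro u v huv hua hva
  have main : ∀ p, ReachIn adj τ p v →
      ((p ≠ a → ReachIn (addEdge adj x y) (τ.erase a) p v) ∧
       (p = a → ∀ w ∈ τ, w ≠ a → adj a w = true →
          ReachIn (addEdge adj x y) (τ.erase a) w v)) := by
    intro p hp
    induction hp using Relation.ReflTransGen.head_induction_on with
    | refl =>
      constructor
      · intro _; exact Relation.ReflTransGen.refl
      · intro hva'; exact absurd hva' hva
    | head hstep htail ih =>
      rename_i q c
      have hqτ : q ∈ τ := hstep.1
      have hcτ : c ∈ τ := hstep.2.1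
      have hqc : adj q c = true := hstep.2.2
      constructor
      · intro hqa
        by_cases hca : c = a
        · -- q is a neighbour of a; use ih.2
          have hadjaq : adj a q = true := by rw [hsymm]; rw [← hca]; exact hqc
          exact ih.2 hca q hqτ hqa hadjaq
        · refine Relation.ReflTransGen.head ?_ (ih.1 hca)
          exact ⟨Finset.mem_erase.mpr ⟨hqa, hqτ⟩, Finset.mem_erase.mpr ⟨hca, hcτ⟩,
            addEdge_mono adj x y q c hqc⟩
      · intro hqa w hwτ hwa hadjaw
        by_cases hca : c = a
        · exact ih.2 hca w hwτ hwa hadjaw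
        · -- c is a neighbour of a, both w and c are in {x,y}
          have hadjac : adj a c = true := by rw [← hqa]; exact hqc
          have hcxy : c = x ∨ c = y := hnbr c hcτ hca hadjac
          have hwxy : w = x ∨ w = y := hnbr w hwτ hwa hadjaw
          by_cases hwc : w = c
          · subst hwc; exact ih.1 hca
          · refine Relation.ReflTransGen.head ?_ (ih.1 hca)
            refine ⟨Finset.mem_erase.mpr ⟨hwa, hwτ⟩, Finset.mem_erase.mpr ⟨hca, hcτ⟩, ?_⟩
            unfold addEdge
            rcases hwxy with rfl | rfl <;> rcases hcxy with rfl | rfl <;> simp at hwc ⊢ <;> tauto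
  exact (main u huv).1 hua

/-- Connectivity surgery lemma. -/
lemma surgery_conn {adj : α → α → Bool} {τ : Finset α} {a x y : α}
    (hsymm : ∀ u v, adj u v = adj v u)
    (hnbr : ∀ u ∈ τ, u ≠ a → adj a u = true → u = x ∨ u = y)
    (hconn : ConnIn adj τ) : ConnIn (addEdge adj x y) (τ.erase a) := by
  intro u hu v hv
  rw [Finset.mem_erase] at hu hv
  exact surgery hsymm hnbr u v (hconn u hu.2 v hv.2) hu.1 hv.1

end Reach

namespace Cx
open Hom
variable {ι : Type} [Fintype ι] [DecidableEq ι] {β : Type} [Fintype β] [DecidableEq β]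

/-- Nerve of the family `F` restricted to the index set `D`. -/
def NC (F : ι → Finset β) (D : Finset ι) : Finset (Finset ι) :=
  univ.filter (fun σ => σ.Nonempty ∧ σ ⊆ D ∧ (σ.inf F).Nonempty)

def simplexC (T : Finset ι) : Finset (Finset ι) :=
  univ.filter (fun σ => σ.Nonempty ∧ σ ⊆ T)

lemma mem_NC {F : ι → Finset β} {D : Finset ι} {σ : Finset ι} :
    σ ∈ NC F D ↔ σ.Nonempty ∧ σ ⊆ D ∧ (σ.inf F).Nonempty := by
  unfold NC; rw [mem_filter]; simp

lemma mem_simplexC {T σ : Finset ι} : σ ∈ simplexC T ↔ σ.Nonempty ∧ σ ⊆ T := by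
  unfold simplexC; rw [mem_filter]; simp

lemma dc_NC (F : ι → Finset β) (D : Finset ι) : DC (NC F D) := by
  intro σ hσ τ hτσ hτne
  rw [mem_NC] at *
  obtain ⟨h1, h2, h3⟩ := hσ
  refine ⟨hτne, hτσ.trans h2, ?_⟩
  obtain ⟨v, hv⟩ := h3
  exact ⟨v, by rw [Finset.mem_inf] at *; exact fun i hi => hv i (hτσ hi)⟩

lemma dc_simplexC (T : Finset ι) : DC (simplexC T) := by
  intro σ hσ τ hτσ hτne
  rw [mem_simplexC] at *
  exact ⟨hτne, hτσ.trans hσ.2⟩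

lemma dc_union {K₁ K₂ : Finset (Finset ι)} (h1 : DC K₁) (h2 : DC K₂) : DC (K₁ ∪ K₂) := by
  intro σ hσ τ hτσ hτne
  rcases Finset.mem_union.mp hσ with h | h
  · exact Finset.mem_union.mpr (Or.inl (h1 σ h τ hτσ hτne))
  · exact Finset.mem_union.mpr (Or.inr (h2 σ h τ hτσ hτne))

lemma bnd_simplexC (T : Finset ι) (d : ℕ) : Bnd (simplexC T) d := by
  intro c hc hcyc
  rcases Finset.eq_empty_or_nonempty c with rfl | ⟨σ0, hσ0⟩
  · exact ⟨∅, by intro σ h; simp at h, by simp [bdry]⟩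
  · have hσ0' := (hc σ0 hσ0).1
    rw [mem_simplexC] at hσ0'
    obtain ⟨⟨i0, hi0⟩, hsub⟩ := hσ0'
    apply cone_lemma (simplexC T) d c i0 hc hcyc
    intro σ hσ
    have hσ' := (hc σ hσ).1
    rw [mem_simplexC] at hσ' ⊢
    exact ⟨⟨i0, Finset.mem_insert_self i0 σ⟩, Finset.insert_subset (hsub hi0) hσ'.2⟩

lemma inter_simplexC (T₁ T₂ : Finset ι) :
    simplexC T₁ ∩ simplexC T₂ = simplexC (T₁ ∩ T₂) := by
  ext σ
  simp only [Finset.mem_inter, mem_simplexC, Finset.subset_inter_iff]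
  tauto

lemma bnd_union2 (T₁ T₂ : Finset ι) (e : ℕ) :
    Bnd (simplexC T₁ ∪ simplexC T₂) (e + 1) := by
  apply mv_lemma _ _ e (dc_simplexC T₁) (dc_simplexC T₂) (bnd_simplexC _ _) (bnd_simplexC _ _)
  rw [inter_simplexC]
  exact bnd_simplexC _ _

lemma bnd_union3 (T₁ T₂ T₃ : Finset ι) (e : ℕ) :
    Bnd (simplexC T₁ ∪ (simplexC T₂ ∪ simplexC T₃)) (e + 2) := by
  apply mv_lemma _ _ (e+1) (dc_simplexC T₁) (dc_union (dc_simplexC T₂) (dc_simplexC T₃))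
    (bnd_simplexC _ _) (bnd_union2 _ _ _)
  rw [Finset.inter_union_distrib_left, inter_simplexC, inter_simplexC]
  exact bnd_union2 _ _ e

lemma subset_three {A : Finset β} (h : A.card ≤ 3) [Nonempty β] :
    ∃ v₁ v₂ v₃ : β, A ⊆ {v₁, v₂, v₃} := by
  interval_cases h' : A.card
  · rw [Finset.card_eq_zero] at h'
    obtain ⟨v⟩ := ‹Nonempty β›
    exact ⟨v, v, v, by simp [h']⟩
  · rw [Finset.card_eq_one] at h'
    obtain ⟨v, hv⟩ := h'
    exact ⟨v, v, v, by simp [hv]⟩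
  · rw [Finset.card_eq_two] at h'
    obtain ⟨v, w, _, hvw⟩ := h'
    exact ⟨v, w, w, by rw [hvw]; intro a ha; simp at ha ⊢; tauto⟩
  · rw [Finset.card_eq_three] at h'
    obtain ⟨v, w, z, _, _, _, hvwz⟩ := h'
    exact ⟨v, w, z, by rw [hvwz]⟩

/-- When all members lie in `A ⊆ {v₁,v₂,v₃}`, the nerve is a union of three simplices. -/
lemma NC_eq_union3 (F : ι → Finset β) (D : Finset ι) (A : Finset β)
    (hA : ∀ i ∈ D, F i ⊆ A) (v₁ v₂ v₃ : β) (h3 : A ⊆ {v₁, v₂, v₃}) :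
    NC F D = simplexC (D.filter (fun i => v₁ ∈ F i))
      ∪ (simplexC (D.filter (fun i => v₂ ∈ F i)) ∪ simplexC (D.filter (fun i => v₃ ∈ F i))) := by
  ext σ
  simp only [Finset.mem_union, mem_NC, mem_simplexC]
  constructor
  · rintro ⟨hne, hσD, v, hv⟩
    rw [Finset.mem_inf] at hv
    obtain ⟨i, hi⟩ := hne
    have hvA : v ∈ A := hA i (hσD hi) (hv i hi)
    have hsub : ∀ w, v = w → σ ⊆ D.filter (fun j => w ∈ F j) := by
      rintro w rfl
      intro j hj
      rw [mem_filter]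
      exact ⟨hσD hj, hv j hj⟩
    rcases Finset.mem_insert.mp (h3 hvA) with h | h
    · exact Or.inl ⟨⟨i, hi⟩, hsub _ h⟩
    · rcases Finset.mem_insert.mp h with h' | h'
      · exact Or.inr (Or.inl ⟨⟨i, hi⟩, hsub _ h'⟩)
      · exact Or.inr (Or.inr ⟨⟨i, hi⟩, hsub _ (Finset.mem_singleton.mp h')⟩)
  · have : ∀ w, σ.Nonempty ∧ σ ⊆ D.filter (fun j => w ∈ F j) →
        σ.Nonempty ∧ σ ⊆ D ∧ (σ.inf F).Nonempty := by
      rintro w ⟨hne, hsub⟩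
      refine ⟨hne, fun j hj => (mem_filter.mp (hsub hj)).1, w, ?_⟩
      rw [Finset.mem_inf]
      exact fun i hi => (mem_filter.mp (hsub hi)).2
    rintro (h | h | h) <;> exact this _ h

/-- The connected-cover condition, Boolean form. -/
def GoodB (adj : β → β → Bool) (F : ι → Finset β) (D : Finset ι) : Prop :=
  ∀ σ : Finset ι, σ ⊆ D → σ.Nonempty → (σ.inf F).Nonempty → Reach.ConnIn adj (σ.inf F)

/-- Series-parallel reducibility certificate. -/
inductive RedP : (β → β → Bool) → Finset β → Prop
  | base (adj : β → β → Bool) (A : Finset β) : A.card ≤ 3 → RedP adj A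
  | step (adj : β → β → Bool) (A : Finset β) (a x y : β) (ha : a ∈ A) (hx : x ≠ a) (hy : y ≠ a)
      (hnbr : ∀ u ∈ A, u ≠ a → adj a u = true → u = x ∨ u = y)
      (hrec : RedP (Reach.addEdge adj x y) (A.erase a)) : RedP adj A

lemma inf_erase {F : ι → Finset β} {σ : Finset ι} (hne : σ.Nonempty) (a : β) :
    σ.inf (fun i => (F i).erase a) = (σ.inf F).erase a := by
  ext v
  rw [Finset.mem_inf, Finset.mem_erase, Finset.mem_inf]
  constructor
  · intro h
    obtain ⟨i, hi⟩ := hne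
    exact ⟨(Finset.mem_erase.mp (h i hi)).1, fun j hj => (Finset.mem_erase.mp (h j hj)).2⟩
  · intro h i hi
    exact Finset.mem_erase.mpr ⟨h.1, h.2 i hi⟩

theorem thmB [Nonempty β] (A : Finset β) (adj : β → β → Bool) (hred : RedP adj A) :
    (∀ u v, adj u v = adj v u) →
    ∀ (F : ι → Finset β) (D : Finset ι), (∀ i ∈ D, F i ⊆ A) → GoodB adj F D →
    ∀ e, Bnd (NC F D) (e + 2) := by
  induction hred with
  | base adj A h3 =>
    intro _ F D hA hgood e
    obtain ⟨v₁, v₂, v₃, hsub⟩ := subset_three h3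
    rw [NC_eq_union3 F D A hA v₁ v₂ v₃ hsub]
    exact bnd_union3 _ _ _ e
  | step adj A a x y ha hx hy hnbr hrec ih =>
    intro hsymm F D hA hgood e
    set Sa := D.filter (fun i => a ∈ F i) with hSa
    set F' := (fun i => (F i).erase a) with hF'
    set K₁ := simplexC Sa with hK₁
    set K₂ := NC F' D with hK₂
    -- the nerve splits
    have hsplit : NC F D = K₁ ∪ K₂ := by
      ext σ
      rw [Finset.mem_union, mem_NC, hK₁, mem_simplexC, hK₂, mem_NC]
      constructor
      · rintro ⟨hne, hσD, hinf⟩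
        by_cases hcase : ((σ.inf F).erase a).Nonempty
        · exact Or.inr ⟨hne, hσD, by rw [hF', inf_erase hne]; exact hcase⟩
        · left
          refine ⟨hne, ?_⟩
          rw [Finset.not_nonempty_iff_eq_empty] at hcase
          obtain ⟨v, hv⟩ := hinf
          have hva : v = a := by
            by_contra hne'
            exact absurd (Finset.mem_erase.mpr ⟨hne', hv⟩) (by rw [hcase]; simp)
          intro i hi
          rw [hSa, mem_filter]
          exact ⟨hσD hi, by rw [← hva]; exact Finset.mem_inf.mp hv i hi⟩
      · rintro (⟨hne, hσSa⟩ | ⟨hne, hσD, hinf⟩)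
        · refine ⟨hne, fun i hi => (mem_filter.mp (hσSa hi)).1, a, ?_⟩
          rw [Finset.mem_inf]
          exact fun i hi => (mem_filter.mp (hσSa hi)).2
        · refine ⟨hne, hσD, ?_⟩
          rw [hF', inf_erase hne] at hinf
          exact hinf.mono (Finset.erase_subset a _)
    -- the intersection is a union of two simplices
    have hinter : K₁ ∩ K₂ = simplexC (Sa.filter (fun i => x ∈ F i))
        ∪ simplexC (Sa.filter (fun i => y ∈ F i)) := by
      ext σ
      rw [Finset.mem_inter, Finset.mem_union, hK₁, mem_simplexC, hK₂, mem_NC,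
        mem_simplexC, mem_simplexC]
      constructor
      · rintro ⟨⟨hne, hσSa⟩, _, hσD, hinf⟩
        rw [hF', inf_erase hne] at hinf
        obtain ⟨b, hb⟩ := hinf
        have hbτ := Finset.mem_erase.mp hb
        have hainf : a ∈ σ.inf F := by
          rw [Finset.mem_inf]
          exact fun i hi => (mem_filter.mp (hσSa hi)).2
        have hconn : Reach.ConnIn adj (σ.inf F) := hgood σ hσD hne ⟨a, hainf⟩
        obtain ⟨w, hwτ, hwa, hadj⟩ := Reach.nbr_exists (hconn a hainf b hbτ.2) hbτ.1
        have hwA : w ∈ A := by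
          obtain ⟨i, hi⟩ := hne
          exact hA i (hσD hi) (Finset.mem_inf.mp hwτ i hi)
        have hw : w = x ∨ w = y := hnbr w hwA hwa hadj
        have hσsub : ∀ z, w = z → σ ⊆ Sa.filter (fun i => z ∈ F i) := by
          rintro z rfl
          intro i hi
          rw [mem_filter]
          exact ⟨hσSa hi, Finset.mem_inf.mp hwτ i hi⟩
        rcases hw with h | h
        · exact Or.inl ⟨hne, hσsub _ h⟩
        · exact Or.inr ⟨hne, hσsub _ h⟩
      · have key : ∀ z, z ≠ a → σ.Nonempty → σ ⊆ Sa.filter (fun i => z ∈ F i) →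
            (σ.Nonempty ∧ σ ⊆ Sa) ∧ σ.Nonempty ∧ σ ⊆ D ∧ (σ.inf F').Nonempty := by
          intro z hza hne hσsub
          have hσSa : σ ⊆ Sa := fun i hi => (mem_filter.mp (hσsub hi)).1
          have hσD : σ ⊆ D := fun i hi => (mem_filter.mp (hσSa hi)).1
          refine ⟨⟨hne, hσSa⟩, hne, hσD, z, ?_⟩
          rw [hF', inf_erase hne, Finset.mem_erase]
          refine ⟨hza, ?_⟩
          rw [Finset.mem_inf]
          exact fun i hi => (mem_filter.mp (hσsub hi)).2
        rintro (⟨hne, hσsub⟩ | ⟨hne, hσsub⟩)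
        · exact key x hx hne hσsub
        · exact key y hy hne hσsub
    -- apply Mayer–Vietoris
    rw [hsplit]
    apply mv_lemma _ _ (e + 1) (dc_simplexC _) (dc_NC _ _) (bnd_simplexC _ _)
    · -- Bnd K₂ (e+2) via the inductive hypothesis
      apply ih (Reach.addEdge_symm hsymm x y) F' D
      · intro i hiD
        rw [hF']
        exact Finset.erase_subset_erase a (hA i hiD)
      · -- GoodB for the reduced family
        intro σ hσD hne hinf
        rw [hF', inf_erase hne] at hinf ⊢
        have hτne : (σ.inf F).Nonempty := hinf.mono (Finset.erase_subset a _)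
        have hconn := hgood σ hσD hne hτne
        apply Reach.surgery_conn hsymm _ hconn
        intro u huτ hua hadj
        obtain ⟨i, hi⟩ := hne
        exact hnbr u (hA i (hσD hi) (Finset.mem_inf.mp huτ i hi)) hua hadj
    · rw [hinter]
      exact bnd_union2 _ _ e

def elemsOf (A : Finset (Fin 8)) : List (Fin 8) := (List.finRange 8).filter (· ∈ A)

lemma mem_elemsOf {A : Finset (Fin 8)} {u : Fin 8} : u ∈ elemsOf A ↔ u ∈ A := by
  unfold elemsOf
  rw [List.mem_filter]
  simp [List.mem_finRange]

def RedF (adj : Fin 8 → Fin 8 → Bool) (A : Finset (Fin 8)) : ℕ → Bool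
  | 0 => A.card ≤ 3
  | n + 1 => A.card ≤ 3 ||
      (elemsOf A).any (fun a =>
        let l := elemsOf ((A.erase a).filter (fun u => adj a u))
        let x := l.getD 0 ((elemsOf (A.erase a)).headD a)
        let y := l.getD 1 x
        (l.length ≤ 2) && RedF (Reach.addEdge adj x y) (A.erase a) n)

lemma redF_sound : ∀ (n : ℕ) (adj : Fin 8 → Fin 8 → Bool) (A : Finset (Fin 8)),
    RedF adj A n = true → RedP adj A := by
  intro n
  induction n with
  | zero =>
    intro adj A h
    exact RedP.base adj A (by simpa [RedF] using h)
  | succ n ih =>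
    intro adj A h
    by_cases hA3 : A.card ≤ 3
    · exact RedP.base adj A hA3
    · rw [show RedF adj A (n+1) = (decide (A.card ≤ 3) ||
        (elemsOf A).any (fun a =>
          let l := elemsOf ((A.erase a).filter (fun u => adj a u))
          let x := l.getD 0 ((elemsOf (A.erase a)).headD a)
          let y := l.getD 1 x
          (decide (l.length ≤ 2)) && RedF (Reach.addEdge adj x y) (A.erase a) n)) from rfl] at h
      rw [Bool.or_eq_true] at h
      rcases h with h | h
      · exact absurd (of_decide_eq_true h) hA3
      · rw [List.any_eq_true] at h
        obtain ⟨a, haL, hcond⟩ := h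
        have haA : a ∈ A := mem_elemsOf.mp haL
        simp only [Bool.and_eq_true, decide_eq_true_eq] at hcond
        set nb := (A.erase a).filter (fun u => adj a u) with hnb
        set l := elemsOf nb with hl
        set x := l.getD 0 ((elemsOf (A.erase a)).headD a) with hxdef
        set y := l.getD 1 x with hydef
        obtain ⟨hlen, hrec⟩ := hcond
        have hAe : (A.erase a).Nonempty := by
          rcases Finset.eq_empty_or_nonempty (A.erase a) with he | hne
          · exfalso
            have : A ⊆ {a} := by
              intro u hu
              by_contra hua
              rw [Finset.mem_singleton] at hua
              exact absurd (Finset.mem_erase.mpr ⟨hua, hu⟩) (by rw [he]; simp)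
            have := Finset.card_le_card this
            simp at this
            omega
          · exact hne
        have hmem_l : ∀ u, u ∈ l → u ∈ A.erase a := by
          intro u hu
          rw [hl, mem_elemsOf, hnb, mem_filter] at hu
          exact hu.1
        have hx : x ≠ a := by
          rw [hxdef]
          rcases l with _ | ⟨u0, l'⟩
          · simp only [List.getD, List.getD_nil, List.headD]
            obtain ⟨b, hb⟩ := hAe
            have hbl : b ∈ elemsOf (A.erase a) := mem_elemsOf.mpr hb
            rcases hE : elemsOf (A.erase a) with _ | ⟨c, l''⟩
            · rw [hE] at hbl; simp at hbl
            · have : c ∈ A.erase a := mem_elemsOf.mp (by rw [hE]; simp)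
              simp only [List.headD]
              exact (Finset.mem_erase.mp this).1
          · have : u0 ∈ A.erase a := hmem_l u0 (by simp)
            simpa using (Finset.mem_erase.mp this).1
        have hy : y ≠ a := by
          rw [hydef]
          rcases hll : l with _ | ⟨u0, _ | ⟨u1, l'⟩⟩
          · simpa [List.getD] using hx
          · simpa [List.getD] using hx
          · have : u1 ∈ A.erase a := hmem_l u1 (by rw [hll]; simp)
            simpa [List.getD] using (Finset.mem_erase.mp this).1
        refine RedP.step adj A a x y haA hx hy ?_ (ih _ _ hrec)
        intro u huA hua hadj
        have hul : u ∈ l := by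
          rw [hl, mem_elemsOf, hnb, mem_filter]
          exact ⟨Finset.mem_erase.mpr ⟨hua, huA⟩, hadj⟩
        rcases hll : l with _ | ⟨u0, _ | ⟨u1, _ | ⟨u2, l'⟩⟩⟩
        · rw [hll] at hul; simp at hul
        · rw [hll] at hul
          simp at hul
          left; rw [hxdef, hll, hul]; rfl
        · rw [hll] at hul
          simp at hul
          rcases hul with rfl | rfl
          · left; rw [hxdef, hll]; rfl
          · right; rw [hydef, hxdef, hll]; rfl
        · rw [hll] at hlen; simp at hlen

def wagB : Fin 8 → Fin 8 → Bool := fun i j => (j - i == 1) || (i - j == 1) || (j - i == 4)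
set_option maxRecDepth 100000 in
theorem factRedF : ∀ A : Finset (Fin 8), A.card ≤ 6 → RedF wagB A 8 = true := by decide

theorem factRed : ∀ A : Finset (Fin 8), A.card ≤ 6 → RedP wagB A :=
  fun A h => redF_sound 8 wagB A (factRedF A h)

theorem factSymm : ∀ u v, wagB u v = wagB v u := by decide

set_option maxRecDepth 100000 in
theorem factCut : ¬ Reach.ConnIn wagB ({0,2,3,5,6} : Finset (Fin 8)) := by decide

/-- closed star of an index `j` -/
def starC (F : ι → Finset β) (D : Finset ι) (j : ι) : Finset (Finset ι) :=
  univ.filter (fun σ => σ.Nonempty ∧ insert j σ ∈ NC F D)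

lemma mem_starC {F : ι → Finset β} {D : Finset ι} {j : ι} {σ : Finset ι} :
    σ ∈ starC F D j ↔ σ.Nonempty ∧ insert j σ ∈ NC F D := by
  unfold starC; rw [mem_filter]; simp

lemma dc_starC (F : ι → Finset β) (D : Finset ι) (j : ι) : DC (starC F D j) := by
  intro σ hσ τ hτσ hτne
  rw [mem_starC] at *
  refine ⟨hτne, dc_NC F D _ hσ.2 _ ?_ (Finset.insert_nonempty j τ)⟩
  exact Finset.insert_subset_insert j hτσ

lemma bnd_starC (F : ι → Finset β) (D : Finset ι) (j : ι) (d : ℕ) :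
    Bnd (starC F D j) d := by
  intro c hc hcyc
  apply cone_lemma _ d c j hc hcyc
  intro σ hσ
  have h := (hc σ hσ).1
  rw [mem_starC] at h ⊢
  rw [Finset.insert_idem]
  exact ⟨Finset.insert_nonempty j σ, h.2⟩

lemma inf_inter {F : ι → Finset β} {G : Finset β} {σ : Finset ι} (hne : σ.Nonempty) :
    σ.inf (fun i => F i ∩ G) = σ.inf F ∩ G := by
  ext v
  rw [Finset.mem_inf, Finset.mem_inter, Finset.mem_inf]
  constructor
  · intro h
    obtain ⟨i, hi⟩ := hne
    exact ⟨fun k hk => (Finset.mem_inter.mp (h k hk)).1, (Finset.mem_inter.mp (h i hi)).2⟩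
  · intro h i hi
    exact Finset.mem_inter.mpr ⟨h.1 i hi, h.2⟩

lemma union_star_del {F : ι → Finset β} {D : Finset ι} {j : ι} (hj : j ∈ D) :
    NC F D = starC F D j ∪ NC F (D.erase j) := by
  ext σ
  simp only [Finset.mem_union, mem_starC, mem_NC]
  constructor
  · rintro ⟨hne, hσD, hinf⟩
    by_cases hjσ : j ∈ σ
    · left
      rw [Finset.insert_eq_self.mpr hjσ]
      exact ⟨hne, hne, hσD, hinf⟩
    · right
      exact ⟨hne, fun i hi => Finset.mem_erase.mpr ⟨fun h => hjσ (h ▸ hi), hσD hi⟩, hinf⟩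
  · rintro (⟨hne, hne2, hsub, hinf⟩ | ⟨hne, hσD, hinf⟩)
    · refine ⟨hne, (Finset.subset_insert j σ).trans hsub, ?_⟩
      obtain ⟨v, hv⟩ := hinf
      rw [Finset.mem_inf] at hv
      exact ⟨v, Finset.mem_inf.mpr fun i hi => hv i (Finset.mem_insert_of_mem hi)⟩
    · exact ⟨hne, hσD.trans (Finset.erase_subset j D), hinf⟩

lemma inter_star_del {F : ι → Finset β} {D : Finset ι} {j : ι} (hj : j ∈ D) :
    starC F D j ∩ NC F (D.erase j) = NC (fun i => F i ∩ F j) (D.erase j) := by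
  ext σ
  simp only [Finset.mem_inter, mem_starC, mem_NC]
  constructor
  · rintro ⟨⟨hne, hne2, hsub, hinf2⟩, hne', hσD, hinf⟩
    refine ⟨hne, hσD, ?_⟩
    rw [inf_inter hne]
    obtain ⟨v, hv⟩ := hinf2
    rw [Finset.mem_inf] at hv
    refine ⟨v, Finset.mem_inter.mpr ⟨?_, hv j (Finset.mem_insert_self j σ)⟩⟩
    rw [Finset.mem_inf]
    exact fun i hi => hv i (Finset.mem_insert_of_mem hi)
  · rintro ⟨hne, hσD, hinf⟩
    rw [inf_inter hne] at hinf
    have h1 : (σ.inf F).Nonempty := hinf.mono Finset.inter_subset_left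
    obtain ⟨v, hv⟩ := hinf
    rw [Finset.mem_inter] at hv
    refine ⟨⟨hne, Finset.insert_nonempty j σ,
      Finset.insert_subset hj (hσD.trans (Finset.erase_subset j D)), v, ?_⟩, hne, hσD, h1⟩
    rw [Finset.mem_inf]
    intro i hi
    rcases Finset.mem_insert.mp hi with rfl | hi'
    · exact hv.2
    · exact Finset.mem_inf.mp hv.1 i hi'

lemma goodB_link {adj : β → β → Bool} {F : ι → Finset β} {D : Finset ι} {j : ι}
    (hgood : GoodB adj F D) (hj : j ∈ D) :
    GoodB adj (fun i => F i ∩ F j) (D.erase j) := by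
  intro σ hσD hne hinf
  rw [inf_inter hne] at hinf ⊢
  have key : σ.inf F ∩ F j = (insert j σ).inf F := by
    rw [Finset.inf_insert, Finset.inf_eq_inter, Finset.inter_comm]
  rw [key] at hinf ⊢
  exact hgood (insert j σ) (Finset.insert_subset hj (hσD.trans (Finset.erase_subset j D)))
    (Finset.insert_nonempty j σ) hinf

lemma NC_empty_D (F : ι → Finset β) : NC F (∅ : Finset ι) = ∅ := by
  rw [Finset.eq_empty_iff_forall_notMem]
  intro σ hσ
  rw [mem_NC] at hσ
  obtain ⟨⟨i, hi⟩, hσD, _⟩ := hσ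
  simpa using hσD hi

lemma bnd_of_empty (d : ℕ) : Bnd (∅ : Finset (Finset ι)) d := by
  intro c hc _
  have : c = ∅ := by
    rw [Finset.eq_empty_iff_forall_notMem]
    intro σ hσ
    simpa using (hc σ hσ).1
  subst this
  exact ⟨∅, by intro σ h; simp at h, by simp [bdry]⟩

theorem thmA : ∀ (D : Finset ι) (F : ι → Finset (Fin 8)), GoodB wagB F D →
    ∀ d, Bnd (NC F D) (d + 3) := by
  suffices H : ∀ (n : ℕ) (D : Finset ι), D.card ≤ n → ∀ (F : ι → Finset (Fin 8)),
      GoodB wagB F D → ∀ d, Bnd (NC F D) (d + 3) by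
    exact fun D F h d => H D.card D le_rfl F h d
  intro n
  induction n with
  | zero =>
    intro D hD F _ d
    have hD0 : D = ∅ := Finset.card_eq_zero.mp (Nat.le_zero.mp hD)
    subst hD0
    rw [NC_empty_D]
    exact bnd_of_empty _
  | succ n ih =>
    intro D hD F hgood d
    by_cases hsmall : ∃ j ∈ D, (F j).card ≤ 6
    · obtain ⟨j, hjD, hj6⟩ := hsmall
      rw [union_star_del hjD]
      apply mv_lemma _ _ (d + 2) (dc_starC F D j) (dc_NC F _) (bnd_starC F D j _)
      · -- del: induction
        apply ih (D.erase j) (by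
          have := Finset.card_erase_of_mem hjD
          omega) F
        intro σ hσD hne hinf
        exact hgood σ (hσD.trans (Finset.erase_subset j D)) hne hinf
      · -- link: thmB
        rw [inter_star_del hjD]
        apply thmB (F j) wagB (factRed _ hj6) factSymm _ _
          (fun i _ => Finset.inter_subset_right) (goodB_link hgood hjD) d
    · -- all members big
      push_neg at hsmall
      rcases Finset.eq_empty_or_nonempty D with rfl | hDne
      · rw [NC_empty_D]; exact bnd_of_empty _
      · by_cases hcommon : (D.inf F).Nonempty
        · -- cone over any index
          obtain ⟨i0, hi0⟩ := hDne
          obtain ⟨v0, hv0⟩ := hcommon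
          intro c hc hcyc
          apply cone_lemma _ _ c i0 hc hcyc
          intro σ hσ
          have h := (hc σ hσ).1
          rw [mem_NC] at h ⊢
          refine ⟨Finset.insert_nonempty i0 σ, Finset.insert_subset hi0 h.2.1, v0, ?_⟩
          rw [Finset.mem_inf]
          intro i hi
          rcases Finset.mem_insert.mp hi with rfl | hi'
          · exact Finset.mem_inf.mp hv0 i hi0
          · exact Finset.mem_inf.mp hv0 i (h.2.1 hi')
        · -- empty intersection: contradiction with connectivity
          exfalso
          have hmiss : ∀ v : Fin 8, ∃ i ∈ D, v ∉ F i := by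
            intro v
            by_contra hv
            push_neg at hv
            exact hcommon ⟨v, Finset.mem_inf.mpr hv⟩
          have hbig : ∀ i ∈ D, ∀ v : Fin 8, v ∉ F i → F i = Finset.univ.erase v := by
            intro i hi v hv
            apply Finset.eq_of_subset_of_card_le
            · intro u hu
              exact Finset.mem_erase.mpr ⟨fun h => hv (h ▸ hu), Finset.mem_univ u⟩
            · have h7 : (Finset.univ.erase v).card = 7 := by
                rw [Finset.card_erase_of_mem (Finset.mem_univ v)]
                simp
              have := hsmall i hi
              omega
          obtain ⟨i1, hi1, hv1⟩ := hmiss 1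
          obtain ⟨i2, hi2, hv2⟩ := hmiss 4
          obtain ⟨i3, hi3, hv3⟩ := hmiss 7
          have hF1 := hbig i1 hi1 1 hv1
          have hF2 := hbig i2 hi2 4 hv2
          have hF3 := hbig i3 hi3 7 hv3
          set σ : Finset ι := insert i1 (insert i2 {i3}) with hσ
          have hσD : σ ⊆ D := by
            intro i hi
            rw [hσ] at hi
            rcases Finset.mem_insert.mp hi with rfl | hi'
            · exact hi1
            · rcases Finset.mem_insert.mp hi' with rfl | hi''
              · exact hi2
              · rw [Finset.mem_singleton] at hi''
                exact hi'' ▸ hi3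
          have hiff : ∀ v : Fin 8, (v ∈ Finset.univ.erase 1 ∧ v ∈ Finset.univ.erase 4
              ∧ v ∈ Finset.univ.erase 7) ↔ v ∈ ({0,2,3,5,6} : Finset (Fin 8)) := by decide
          have hinfeq : σ.inf F = ({0,2,3,5,6} : Finset (Fin 8)) := by
            ext v
            rw [Finset.mem_inf]
            constructor
            · intro h
              refine (hiff v).mp ⟨?_, ?_, ?_⟩
              · rw [← hF1]; exact h i1 (by rw [hσ]; simp)
              · rw [← hF2]; exact h i2 (by rw [hσ]; simp)
              · rw [← hF3]; exact h i3 (by rw [hσ]; simp)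
            · intro hv i hi
              have h3 := (hiff v).mpr hv
              rw [hσ] at hi
              rcases Finset.mem_insert.mp hi with rfl | hi'
              · rw [hF1]; exact h3.1
              · rcases Finset.mem_insert.mp hi' with rfl | hi''
                · rw [hF2]; exact h3.2.1
                · rw [Finset.mem_singleton] at hi''
                  subst hi''
                  rw [hF3]; exact h3.2.2
          have hconn := hgood σ hσD (by rw [hσ]; exact Finset.insert_nonempty _ _)
            (by rw [hinfeq]; decide)
          rw [hinfeq] at hconn
          exact factCut hconn

end Cx
-- ===== bridge to SimpleGraph and final assembly =====

instance : DecidableRel wagnerGraph.Adj := fun a b =>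
  decidable_of_iff _ (SimpleGraph.fromRel_adj _ a b).symm

theorem wag_adj : ∀ u v : Fin 8, wagnerGraph.Adj u v ↔ Cx.wagB u v = true := by decide

theorem conn_of_connected {s : Finset (Fin 8)}
    (h : (wagnerGraph.induce ((s : Finset (Fin 8)) : Set (Fin 8))).Connected) :
    Reach.ConnIn Cx.wagB s := by
  intro u hu v hv
  have hu' : u ∈ (s : Set (Fin 8)) := by simpa using hu
  have hv' : v ∈ (s : Set (Fin 8)) := by simpa using hv
  obtain ⟨w⟩ := h.preconnected ⟨u, hu'⟩ ⟨v, hv'⟩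
  suffices H : ∀ (a b : ((s : Set (Fin 8)) : Type)),
      (wagnerGraph.induce (s : Set (Fin 8))).Walk a b →
      Reach.ReachIn Cx.wagB s (a : Fin 8) (b : Fin 8) from H _ _ w
  intro a b w
  induction w with
  | nil => exact Relation.ReflTransGen.refl
  | cons hadj p ih =>
    rename_i a' b' c'
    refine Relation.ReflTransGen.head ?_ ih
    have hA : wagnerGraph.Adj (a' : Fin 8) (b' : Fin 8) := hadj
    exact ⟨by simpa using a'.2, by simpa using b'.2, (wag_adj _ _).mp hA⟩

theorem connected_of_conn {s : Finset (Fin 8)} (hne : s.Nonempty)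
    (h : Reach.ConnIn Cx.wagB s) :
    (wagnerGraph.induce ((s : Finset (Fin 8)) : Set (Fin 8))).Connected := by
  obtain ⟨u0, hu0⟩ := hne
  rw [SimpleGraph.connected_iff]
  refine ⟨?_, ⟨⟨u0, by simpa using hu0⟩⟩⟩
  rintro ⟨a, ha⟩ ⟨b, hb⟩
  have haf : a ∈ s := by simpa using ha
  have hbf : b ∈ s := by simpa using hb
  have hr := h a haf b hbf
  suffices H : ∀ v, Reach.ReachIn Cx.wagB s a v → ∀ (hv : v ∈ (s : Set (Fin 8))),
      (wagnerGraph.induce (s : Set (Fin 8))).Reachable ⟨a, by simpa using haf⟩ ⟨v, hv⟩ from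
    H b hr (by simpa using hbf)
  intro v hv
  induction hv with
  | refl => intro _; exact SimpleGraph.Reachable.refl _
  | tail hR hstep ih =>
    rename_i p q
    intro hq
    have hp : p ∈ s := hstep.1
    refine (ih (by simpa using hp)).trans ?_
    apply SimpleGraph.Adj.reachable
    show wagnerGraph.Adj p q
    exact (wag_adj _ _).mpr hstep.2.2

/-- The explicit connected cover witnessing `γ(W₈) ≥ 2`. -/
def Fcov : Fin 4 → Finset (Fin 8) :=
  ![{2,3,4,5,6,7}, {0,1,4,5,6,7}, {0,1,2,3,6,7}, {0,1,2,3,4,5}]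

set_option maxRecDepth 100000 in
theorem cover_conn : ∀ σ : Finset (Fin 4), (σ.inf Fcov).Nonempty →
    Reach.ConnIn Cx.wagB (σ.inf Fcov) := by decide

theorem cover_nonempty : ∀ i, (Fcov i).Nonempty := by decide

theorem isConnCover_Fcov : IsConnCover wagnerGraph Fcov := by
  refine ⟨cover_nonempty, ?_⟩
  intro σ _ h2
  exact connected_of_conn h2 (cover_conn σ h2)

theorem rhn_Fcov : RedHomNonzero (nerveF Fcov) 2 := by
  refine ⟨({{0,1,2},{0,1,3},{0,2,3},{1,2,3}} : Finset (Finset (Fin 4))), ?_, ?_, ?_⟩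
  · have h : ∀ σ ∈ ({{0,1,2},{0,1,3},{0,2,3},{1,2,3}} : Finset (Finset (Fin 4))),
        σ ∈ nerveF Fcov ∧ σ.card = 2 + 1 := by decide
    exact h
  · decide
  · intro b hb
    have hbe : b = ∅ := by
      rw [Finset.eq_empty_iff_forall_notMem]
      intro σ hσ
      obtain ⟨hmem, hcard⟩ := hb σ hσ
      have huniv : σ = Finset.univ := by
        apply Finset.eq_univ_of_card
        rw [hcard]
        rfl
      subst huniv
      revert hmem
      decide
    subst hbe
    intro hbd
    rw [show bdry (∅ : Finset (Finset (Fin 4))) = ∅ from by simp [bdry]] at hbd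
    exact absurd hbd.symm (by decide)

theorem gammaGe2 : GammaGe wagnerGraph 2 :=
  ⟨4, Fcov, isConnCover_Fcov, rhn_Fcov⟩

theorem upperBound (d : ℕ) (hd : 2 < d) : ¬ GammaGe wagnerGraph d := by
  rintro ⟨n, F, hcov, c, hch, hcyc, hall⟩
  have hgood : Cx.GoodB Cx.wagB F Finset.univ := by
    intro σ _ hne hinf
    exact conn_of_connected (hcov.2 σ hne hinf)
  have heq : Cx.NC F Finset.univ = nerveF F := by
    ext σ
    rw [Cx.mem_NC]
    unfold nerveF
    rw [Finset.mem_filter]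
    simp [Finset.subset_univ]
  obtain ⟨e, rfl⟩ : ∃ e, d = e + 3 := ⟨d - 3, by omega⟩
  have hbnd := Cx.thmA Finset.univ F hgood e
  rw [heq] at hbnd
  obtain ⟨b, hbch, hbd⟩ := hbnd c hch hcyc
  exact hall b hbch hbd

/-- the homological dimension of the Wagner graph is 2. -/
theorem stmt10 : HomDimEq wagnerGraph 2 := by
  constructor
  · intro d hd
    exact upperBound d (by exact_mod_cast hd)
  · intro d hd
    have h2 : d = 2 := by exact_mod_cast hd
    subst h2
    exact gammaGe2
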